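/- Let H be a real Hilbert space, let f : H → ℝ ∪ {∞} be closed, proper, convex, and let g : H → ℝ be convex and Fréchet differentiable with ∇g Lipschitz with constant 1/β (β > 0). Let 0 < γ < 2β, let x* be a minimizer of f + g, and define the forward–backward iterates z^{k+1} = prox_{γf}(z^k − γ∇g(z^k)) from z^0 in the effective domain of f + g. Then for all k ≥ 0: if γ ≤ β, f(z^{k+1}) + g(z^{k+1}) − f(x*) − g(x*) ≤ ‖z^0 − x*‖²/(2γ(k+1)); in general, f(z^{k+1}) + g(z^{k+1}) − f(x*) − g(x*) ≤ (1/(2γ) + (1/(2β) − 1/(2γ))·α/(1−α))·‖z^0 − x*‖²/(k+1), where α := 2β/(4β − γ). Moreover (k+1)·(f(z^{k+1}) + g(z^{k+1}) − f(x*) − g(x*)) → 0 as k → ∞. -/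

import Mathlib

open RealInnerProductSpace Filter Topology

section Aux

variable {H : Type*} [NormedAddCommGroup H] [InnerProductSpace ℝ H] [CompleteSpace H]

lemma fbs_line_hasDerivAt {g : H → ℝ} {u : H} {p : H} (hu : HasGradientAt g u p)
    (x d : H) (t : ℝ) (hp : p = x + t • d) :
    HasDerivAt (fun t : ℝ => g (x + t • d)) ⟪u, d⟫ t := by
  have hline : HasDerivAt (fun s : ℝ => x + s • d) d t := by
    simpa using ((hasDerivAt_id t).smul_const d).const_add x
  have hF : HasFDerivAt g (InnerProductSpace.toDual ℝ H u) (x + t • d) := by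
    rw [← hp]; exact hu.hasFDerivAt
  have := hF.comp_hasDerivAt t hline
  simpa [InnerProductSpace.toDual_apply_apply, Function.comp_def] using this

/-- first-order condition for convexity -/

lemma fbs_convex_grad_le {g : H → ℝ} (hg : ConvexOn ℝ Set.univ g) {x u : H}
    (hu : HasGradientAt g u x) (y : H) : g x + ⟪u, y - x⟫ ≤ g y := by
  set d := y - x with hd
  have hcomp : HasDerivAt (fun t : ℝ => g (x + t • d)) ⟪u, d⟫ 0 :=
    fbs_line_hasDerivAt hu x d 0 (by simp)
  have hslope : Tendsto (slope (fun t : ℝ => g (x + t • d)) 0) (𝓝[>] 0) (𝓝 ⟪u, d⟫) :=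
    (hasDerivAt_iff_tendsto_slope.mp hcomp).mono_left
      (nhdsWithin_mono 0 (fun t ht => ne_of_gt ht))
  have hb : ∀ᶠ t in 𝓝[>] (0:ℝ), slope (fun t : ℝ => g (x + t • d)) 0 t ≤ g y - g x := by
    filter_upwards [Ioo_mem_nhdsGT_of_mem (by simp : (0:ℝ) ∈ Set.Ico (0:ℝ) 1)] with t ht
    have hx : x + t • d = (1 - t) • x + t • y := by rw [hd]; module
    have hconv := hg.2 (Set.mem_univ x) (Set.mem_univ y) (by linarith [ht.2] : (0:ℝ) ≤ 1 - t)
      (le_of_lt ht.1) (by ring)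
    have h1 : g (x + t • d) ≤ (1 - t) * g x + t * g y := by rw [hx]; simpa using hconv
    rw [slope_def_field, sub_zero, div_le_iff₀ ht.1]
    simp only [zero_smul, add_zero]
    nlinarith [ht.1, h1]
  have := le_of_tendsto hslope hb
  linarith

/-- descent lemma for Lipschitz gradient -/

lemma fbs_descent_lemma {g : H → ℝ} {g' : H → H} (hg' : ∀ x, HasGradientAt g (g' x) x)
    {L : ℝ} (hL : 0 ≤ L) (hLip : ∀ a b : H, ‖g' a - g' b‖ ≤ L * ‖a - b‖) (x y : H) :
    g y ≤ g x + ⟪g' x, y - x⟫ + L / 2 * ‖y - x‖ ^ 2 := by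
  set d := y - x with hd
  set φ : ℝ → ℝ := fun t => g (x + t • d) - t * ⟪g' x, d⟫ - t ^ 2 * (L / 2) * ‖d‖ ^ 2 with hφ
  have hφ' : ∀ t : ℝ, HasDerivAt φ
      (⟪g' (x + t • d), d⟫ - ⟪g' x, d⟫ - t * L * ‖d‖ ^ 2) t := by
    intro t
    have h1 : HasDerivAt (fun t : ℝ => g (x + t • d)) ⟪g' (x + t • d), d⟫ t :=
      fbs_line_hasDerivAt (hg' _) x d t rfl
    have h2 : HasDerivAt (fun t : ℝ => t * ⟪g' x, d⟫) ⟪g' x, d⟫ t := hasDerivAt_mul_const _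
    have h3 : HasDerivAt (fun t : ℝ => t ^ 2 * (L / 2) * ‖d‖ ^ 2)
        (2 * t * (L / 2) * ‖d‖ ^ 2) t := by
      have := ((hasDerivAt_pow 2 t).mul_const (L / 2)).mul_const (‖d‖ ^ 2)
      simpa [mul_comm, mul_assoc, mul_left_comm] using this
    have := (h1.sub h2).sub h3
    exact this.congr_deriv (by ring)
  have hanti : AntitoneOn φ (Set.Icc 0 1) := by
    apply antitoneOn_of_deriv_nonpos (convex_Icc 0 1)
    · exact fun t _ => ((hφ' t).differentiableAt.continuousAt).continuousWithinAt
    · exact fun t _ => ((hφ' t).differentiableAt).differentiableWithinAt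
    · intro t ht
      rw [interior_Icc] at ht
      rw [(hφ' t).deriv]
      have hin : ⟪g' (x + t • d) - g' x, d⟫ ≤ ‖g' (x + t • d) - g' x‖ * ‖d‖ :=
        real_inner_le_norm _ _
      have hlip := hLip (x + t • d) x
      have hn : ‖x + t • d - x‖ = t * ‖d‖ := by
        rw [add_sub_cancel_left, norm_smul, Real.norm_eq_abs, abs_of_pos ht.1]
      rw [hn] at hlip
      have h0 : (0:ℝ) ≤ ‖d‖ := norm_nonneg _
      have := hin.trans (mul_le_mul_of_nonneg_right hlip h0)
      rw [inner_sub_left] at this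
      nlinarith
  have h01 := hanti (Set.left_mem_Icc.mpr zero_le_one) (Set.right_mem_Icc.mpr zero_le_one)
    zero_le_one
  have h0 : φ 0 = g x := by simp [hφ]
  have h1 : φ 1 = g y - ⟪g' x, d⟫ - L / 2 * ‖d‖ ^ 2 := by
    simp [hφ, hd]
  rw [h0, h1] at h01
  linarith

lemma fbs_coco_key {g : H → ℝ} (hg : ConvexOn ℝ Set.univ g) {g' : H → H}
    (hg' : ∀ x, HasGradientAt g (g' x) x) {β : ℝ} (hβ : 0 < β)
    (hLip : ∀ a b : H, ‖g' a - g' b‖ ≤ 1 / β * ‖a - b‖) (x y : H) :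
    g x + ⟪g' x, y - x⟫ + β / 2 * ‖g' y - g' x‖ ^ 2 ≤ g y := by
  set c := g' x with hc
  set h : H → ℝ := fun z => g z - ⟪c, z⟫ with hh
  set h' : H → H := fun z => g' z - c with hh'
  have hdh : ∀ z, HasGradientAt h (h' z) z := by
    intro z
    rw [hasGradientAt_iff_hasFDerivAt]
    have h2 : HasFDerivAt (fun z : H => ⟪c, z⟫) (InnerProductSpace.toDual ℝ H c) z := by
      have := (InnerProductSpace.toDual ℝ H c).hasFDerivAt (x := z)
      apply this.congr_of_eventuallyEq
      filter_upwards with w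
      simp [InnerProductSpace.toDual_apply_apply]
    have := (hg' z).hasFDerivAt.sub h2
    rwa [← map_sub] at this
  have hhLip : ∀ a b : H, ‖h' a - h' b‖ ≤ 1 / β * ‖a - b‖ := by
    intro a b
    have : h' a - h' b = g' a - g' b := by simp [hh']
    rw [this]; exact hLip a b
  have hhconv : ConvexOn ℝ Set.univ h := by
    refine ⟨convex_univ, fun p _ q _ a b ha hb hab => ?_⟩
    have := hg.2 (Set.mem_univ p) (Set.mem_univ q) ha hb hab
    simp only [hh, smul_eq_mul] at *
    rw [inner_add_right, real_inner_smul_right, real_inner_smul_right]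
    linarith
  have hmin : ∀ z, h x ≤ h z := by
    intro z
    have := fbs_convex_grad_le hhconv (hdh x) z
    have hz : h' x = 0 := by simp [hh', hc]
    rw [hz] at this
    simpa using this
  have hdesc := fbs_descent_lemma hdh (by positivity : (0:ℝ) ≤ 1/β) hhLip y (y - β • h' y)
  have he : y - β • h' y - y = -(β • h' y) := by abel
  rw [he] at hdesc
  have hi1 : ⟪h' y, -(β • h' y)⟫ = -(β * ‖h' y‖ ^ 2) := by
    rw [inner_neg_right, real_inner_smul_right, real_inner_self_eq_norm_sq]
  have hi2 : ‖-(β • h' y)‖ ^ 2 = β ^ 2 * ‖h' y‖ ^ 2 := by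
    rw [norm_neg, norm_smul, Real.norm_eq_abs, abs_of_pos hβ, mul_pow]
  rw [hi1, hi2] at hdesc
  have hmm := hmin (y - β • h' y)
  have hfin : h x ≤ h y - β / 2 * ‖h' y‖ ^ 2 := by
    have hβ' : β ≠ 0 := ne_of_gt hβ
    calc h x ≤ h (y - β • h' y) := hmm
    _ ≤ h y + -(β * ‖h' y‖ ^ 2) + 1 / β / 2 * (β ^ 2 * ‖h' y‖ ^ 2) := hdesc
    _ = h y - β / 2 * ‖h' y‖ ^ 2 := by field_simp; ring
  simp only [hh, hh'] at hfin
  have : ⟪c, y⟫ - ⟪c, x⟫ = ⟪c, y - x⟫ := (inner_sub_right _ _ _).symm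
  linarith

/-- cocoercivity of the gradient (Baillon–Haddad) -/

lemma fbs_coco {g : H → ℝ} (hg : ConvexOn ℝ Set.univ g) {g' : H → H}
    (hg' : ∀ x, HasGradientAt g (g' x) x) {β : ℝ} (hβ : 0 < β)
    (hLip : ∀ a b : H, ‖g' a - g' b‖ ≤ 1 / β * ‖a - b‖) (x y : H) :
    β * ‖g' x - g' y‖ ^ 2 ≤ ⟪g' x - g' y, x - y⟫ := by
  have ha := fbs_coco_key hg hg' hβ hLip x y
  have hb := fbs_coco_key hg hg' hβ hLip y x
  have hn : ‖g' x - g' y‖ = ‖g' y - g' x‖ := norm_sub_rev _ _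
  have hi : ⟪g' x, y - x⟫ + ⟪g' y, x - y⟫ = -⟪g' x - g' y, x - y⟫ := by
    rw [inner_sub_left]
    have : ⟪g' x, y - x⟫ = -⟪g' x, x - y⟫ := by
      rw [← inner_neg_right]; congr 1; abel
    rw [this]; ring
  rw [← hn] at ha
  linarith [ha, hb, hi]
lemma fbs_add_coe_ne_top {w : EReal} (hw : w ≠ ⊤) (r : ℝ) : w + (r : EReal) ≠ ⊤ := by
  induction w using EReal.rec with
  | bot => simp
  | coe a => rw [← EReal.coe_add]; exact EReal.coe_ne_top _
  | top => exact absurd rfl hw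

lemma fbs_le_of_forall_unit {a b K : ℝ} (hK : 0 ≤ K)
    (h : ∀ t : ℝ, 0 < t → t ≤ 1 → a ≤ b + t * K) : a ≤ b := by
  apply le_of_forall_pos_le_add
  intro ε hε
  have ht0 : 0 < min 1 (ε / (K + 1)) := lt_min one_pos (by positivity)
  have := h _ ht0 (min_le_left _ _)
  have hle : min 1 (ε / (K + 1)) * K ≤ ε := by
    have h1 : min 1 (ε / (K + 1)) ≤ ε / (K + 1) := min_le_right _ _
    have h2 : min 1 (ε / (K + 1)) * K ≤ ε / (K + 1) * K :=
      mul_le_mul_of_nonneg_right h1 hK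
    have h3 : ε / (K + 1) * K ≤ ε := by
      rw [div_mul_eq_mul_div, div_le_iff₀ (by linarith)]
      nlinarith
    linarith
  linarith

/-- nonincreasing nonnegative sequence with bounded partial sums: `n * a n → 0` -/

lemma fbs_prox_subgrad (f : H → EReal) (hf_bot : ∀ x, f x ≠ ⊥)
    (hf_conv : ∀ x y : H, ∀ a b : ℝ, 0 ≤ a → 0 ≤ b → a + b = 1 →
      f (a • x + b • y) ≤ (a : EReal) * f x + (b : EReal) * f y)
    {γ : ℝ} (hγ : 0 < γ) (v p : H) (hpfin : f p ≠ ⊤)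
    (hmin : ∀ y : H, f p + ((1 / (2 * γ) * ‖p - v‖ ^ 2 : ℝ) : EReal) ≤
      f y + ((1 / (2 * γ) * ‖y - v‖ ^ 2 : ℝ) : EReal))
    (y : H) :
    (((f p).toReal + 1 / γ * ⟪v - p, y - p⟫ : ℝ) : EReal) ≤ f y := by
  by_cases hy : f y = ⊤
  · rw [hy]; exact le_top
  set a := (f p).toReal with ha
  set b := (f y).toReal with hb
  have hpa : f p = (a : EReal) := (EReal.coe_toReal hpfin (hf_bot p)).symm
  have hyb : f y = (b : EReal) := (EReal.coe_toReal hy (hf_bot y)).symm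
  rw [hyb]
  rw [EReal.coe_le_coe_iff]
  set I : ℝ := ⟪p - v, y - p⟫ with hI
  set N : ℝ := ‖y - p‖ ^ 2 with hN
  have hvp : ⟪v - p, y - p⟫ = -I := by
    rw [hI, ← inner_neg_left]; congr 1; abel
  rw [hvp]
  apply fbs_le_of_forall_unit (show (0:ℝ) ≤ 1 / (2 * γ) * N by positivity)
  intro t ht0 ht1
  set yt := p + t • (y - p) with hyt
  have hcvx : f yt ≤ (((1 - t) * a + t * b : ℝ) : EReal) := by
    have h1 : (1 - t) • p + t • y = yt := by rw [hyt]; module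
    have := hf_conv p y (1 - t) t (by linarith) (le_of_lt ht0) (by ring)
    rw [h1, hpa, hyb, ← EReal.coe_mul, ← EReal.coe_mul, ← EReal.coe_add] at this
    exact this
  have hytfin : f yt ≠ ⊤ := by
    intro h
    rw [h, top_le_iff] at hcvx
    exact EReal.coe_ne_top _ hcvx
  set m := (f yt).toReal with hm
  have hym : f yt = (m : EReal) := (EReal.coe_toReal hytfin (hf_bot yt)).symm
  rw [hym, EReal.coe_le_coe_iff] at hcvx
  have hmt := hmin yt
  rw [hpa, hym, ← EReal.coe_add, ← EReal.coe_add, EReal.coe_le_coe_iff] at hmt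
  have hexp : ‖yt - v‖ ^ 2 = ‖p - v‖ ^ 2 + 2 * t * I + t ^ 2 * N := by
    have h1 : yt - v = (p - v) + t • (y - p) := by rw [hyt]; abel
    rw [h1, norm_add_sq_real, real_inner_smul_right, norm_smul, Real.norm_eq_abs,
      mul_pow, sq_abs, ← hI, ← hN]
    ring
  rw [hexp] at hmt
  have hγ' : γ ≠ 0 := ne_of_gt hγ
  have hdiv : t * (a + 1 / γ * (-I)) ≤ t * (b + t * (1 / (2 * γ) * N)) := by
    have hcomb : t * a ≤ t * b + t / γ * I + t ^ 2 / (2 * γ) * N := by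
      have e1 : 1 / (2 * γ) * (‖p - v‖ ^ 2 + 2 * t * I + t ^ 2 * N) =
          1 / (2 * γ) * ‖p - v‖ ^ 2 + t / γ * I + t ^ 2 / (2 * γ) * N := by
        field_simp
      rw [e1] at hmt
      linarith
    have : t * (a + 1 / γ * (-I)) = t * a - t / γ * I := by field_simp; ring
    rw [this]
    have : t * (b + t * (1 / (2 * γ) * N)) = t * b + t ^ 2 / (2 * γ) * N := by
      field_simp
    rw [this]
    linarith
  exact le_of_mul_le_mul_left hdiv ht0

lemma fbs_tendsto_nat_mul_atTop_zero {a : ℕ → ℝ} (h0 : ∀ n, 0 ≤ a n)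
    (hmono : ∀ m n, m ≤ n → a n ≤ a m) {c : ℝ}
    (hsum : ∀ n, ∑ i ∈ Finset.range n, a i ≤ c) :
    Tendsto (fun n : ℕ => (n : ℝ) * a n) atTop (𝓝 0) := by
  have hsummable : Summable a := summable_of_sum_range_le h0 hsum
  have htail : Tendsto (fun n => ∑ i ∈ Finset.range n, a i) atTop (𝓝 (∑' i, a i)) :=
    hsummable.hasSum.tendsto_sum_nat
  rw [Metric.tendsto_atTop]
  intro ε hε
  -- choose N with tsum - partial sum < ε/2
  have hev : ∀ᶠ n in atTop, (∑' i, a i) - ∑ i ∈ Finset.range n, a i < ε / 2 := by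
    have := htail.eventually (eventually_gt_nhds (show (∑' i, a i) - ε/2 < ∑' i, a i by linarith))
    filter_upwards [this] with n hn
    linarith
  obtain ⟨N, hN⟩ := hev.exists
  refine ⟨2 * N + 1, fun n hn => ?_⟩
  have hnN : N ≤ n := by omega
  -- (n - N) * a n ≤ partial sums difference
  have hkey : ((n : ℝ) - N) * a n ≤ (∑' i, a i) - ∑ i ∈ Finset.range N, a i := by
    have hcard : (Finset.Ico N n).card = n - N := Nat.card_Ico N n
    have hle : (Finset.Ico N n).card • a n ≤ ∑ i ∈ Finset.Ico N n, a i := by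
      apply Finset.card_nsmul_le_sum
      intro i hi
      exact hmono i n (le_of_lt (Finset.mem_Ico.mp hi).2) |>.trans_eq rfl
    have hico : ∑ i ∈ Finset.Ico N n, a i =
        (∑ i ∈ Finset.range n, a i) - ∑ i ∈ Finset.range N, a i := by
      rw [Finset.sum_Ico_eq_sub _ hnN]
    have hps : ∑ i ∈ Finset.range n, a i ≤ ∑' i, a i :=
      Summable.sum_le_tsum _ (fun i _ => h0 i) hsummable
    have : ((n - N : ℕ) : ℝ) * a n ≤ ∑ i ∈ Finset.Ico N n, a i := by
      rw [← hcard]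
      simpa [nsmul_eq_mul] using hle
    rw [Nat.cast_sub hnN] at this
    linarith
  have h2 : ((n:ℝ) - N) * a n < ε / 2 := lt_of_le_of_lt hkey hN
  have hna : 0 ≤ a n := h0 n
  have hhalf : (n : ℝ) ≤ 2 * ((n:ℝ) - N) := by
    have : (2 * N + 1 : ℕ) ≤ n := hn
    have : (2 * N + 1 : ℝ) ≤ n := by exact_mod_cast this
    linarith
  have : (n : ℝ) * a n < ε := by nlinarith
  rw [Real.dist_eq, sub_zero, abs_of_nonneg (by positivity)]
  exact this

end Aux

set_option maxHeartbeats 2000000 in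
theorem fbs_objective_rate
    {H : Type*} [NormedAddCommGroup H] [InnerProductSpace ℝ H] [CompleteSpace H]
    (f : H → EReal)
    (hf_bot : ∀ x, f x ≠ ⊥) (hf_proper : ∃ x, f x ≠ ⊤)
    (hf_lsc : LowerSemicontinuous f)
    (hf_conv : ∀ x y : H, ∀ a b : ℝ, 0 ≤ a → 0 ≤ b → a + b = 1 →
      f (a • x + b • y) ≤ (a : EReal) * f x + (b : EReal) * f y)
    (g : H → ℝ) (hg_conv : ConvexOn ℝ Set.univ g)
    (g' : H → H) (hg' : ∀ x : H, HasGradientAt g (g' x) x)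
    (β : ℝ) (hβ : 0 < β)
    (hLip : ∀ x y : H, ‖g' x - g' y‖ ≤ (1 / β) * ‖x - y‖)
    (γ : ℝ) (hγ : 0 < γ) (hγ2β : γ < 2 * β)
    (proxf : H → H)
    (hproxf : ∀ x p : H, proxf x = p ↔
      ∀ y : H, f p + ((1 / (2 * γ) * ‖p - x‖ ^ 2 : ℝ) : EReal) ≤
        f y + ((1 / (2 * γ) * ‖y - x‖ ^ 2 : ℝ) : EReal))
    (xstar : H)
    (hxstar : ∀ y : H, f xstar + ((g xstar : ℝ) : EReal) ≤ f y + ((g y : ℝ) : EReal))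
    (z : ℕ → H) (hz0 : f (z 0) ≠ ⊤)
    (hz : ∀ k, z (k + 1) = proxf (z k - γ • g' (z k))) :
    (∀ k : ℕ,
      f (z (k + 1)) + ((g (z (k + 1)) : ℝ) : EReal) - (f xstar + ((g xstar : ℝ) : EReal)) ≤
        (((if γ ≤ β then 1 / (2 * γ)
            else 1 / (2 * γ) + (1 / (2 * β) - 1 / (2 * γ)) *
              (2 * β / (4 * β - γ)) / (1 - 2 * β / (4 * β - γ))) *
          ‖z 0 - xstar‖ ^ 2 / ((k : ℝ) + 1) : ℝ) : EReal)) ∧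
    Filter.Tendsto
      (fun k : ℕ => (((k : ℝ) + 1 : ℝ) : EReal) *
        (f (z (k + 1)) + ((g (z (k + 1)) : ℝ) : EReal) -
          (f xstar + ((g xstar : ℝ) : EReal))))
      Filter.atTop (nhds 0) := by
  obtain ⟨y₀, hy₀⟩ := hf_proper
  set C : ℝ := if γ ≤ β then 1 / (2 * γ)
    else 1 / (2 * γ) + (1 / (2 * β) - 1 / (2 * γ)) *
      (2 * β / (4 * β - γ)) / (1 - 2 * β / (4 * β - γ)) with hC
  set R : ℝ := ‖z 0 - xstar‖ ^ 2 with hR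
  have hRnn : 0 ≤ R := by positivity
  -- finiteness of f along iterates
  have hfz : ∀ k, f (z k) ≠ ⊤ := by
    intro k
    cases k with
    | zero => exact hz0
    | succ k =>
      have hp := (hproxf (z k - γ • g' (z k)) (z (k + 1))).mp (hz k).symm
      have h2 := hp y₀
      intro h
      rw [h, EReal.top_add_coe, top_le_iff] at h2
      by_cases hne : f y₀ = ⊤
      · exact hy₀ hne
      · exact fbs_add_coe_ne_top hne _ h2
  have hfxfin : f xstar ≠ ⊤ := by
    have h2 := hxstar (z 0)
    intro h
    rw [h, EReal.top_add_coe, top_le_iff] at h2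
    exact fbs_add_coe_ne_top (hfz 0) _ h2
  set s : ℝ := (f xstar).toReal with hsdef
  have hs : f xstar = (s : EReal) := (EReal.coe_toReal hfxfin (hf_bot _)).symm
  set φ : ℕ → ℝ := fun k => (f (z k)).toReal with hφdef
  have hφ : ∀ k, f (z k) = ((φ k : ℝ) : EReal) :=
    fun k => (EReal.coe_toReal (hfz k) (hf_bot _)).symm
  -- real-valued subgradient inequality at prox points
  have hsubR : ∀ k : ℕ, ∀ y : H, ∀ r : ℝ, f y = (r : EReal) →
      φ (k + 1) + 1 / γ * ⟪(z k - γ • g' (z k)) - z (k + 1), y - z (k + 1)⟫ ≤ r := by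
    intro k y r hr
    have h := fbs_prox_subgrad f hf_bot hf_conv hγ (z k - γ • g' (z k)) (z (k + 1))
      (hfz (k + 1)) ((hproxf _ _).mp (hz k).symm) y
    rw [hr, EReal.coe_le_coe_iff] at h
    exact h
  -- key one-step inequality (scaled by 2βγ)
  have hkey : ∀ k : ℕ, ∀ x : H, ∀ r : ℝ, f x = (r : EReal) →
      2 * β * γ * (φ (k + 1) + g (z (k + 1))) ≤
        2 * β * γ * (r + g x) + β * (‖z k - x‖ ^ 2 - ‖z (k + 1) - x‖ ^ 2) +
        (γ - β) * ‖z (k + 1) - z k‖ ^ 2 := by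
    intro k x r hr
    set p := z (k + 1) with hp
    set zk := z k with hzk
    set uk := g' (z k) with huk
    set A : ℝ := ⟪zk - p, x - p⟫ with hA
    set B : ℝ := ⟪uk, x - p⟫ with hB
    set Cc : ℝ := ⟪uk, p - zk⟫ with hCc
    set E : ℝ := ⟪uk, x - zk⟫ with hE
    set D : ℝ := ‖p - zk‖ ^ 2 with hD
    set F : ℝ := ‖x - p‖ ^ 2 with hF
    set G : ℝ := ‖zk - x‖ ^ 2 with hG
    -- subgradient step, rescaled
    have H1 := hsubR k x r hr
    have hin : ⟪zk - γ • uk - p, x - p⟫ = A - γ * B := by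
      rw [show zk - γ • uk - p = (zk - p) - γ • uk by abel, inner_sub_left,
        real_inner_smul_left, hA, hB]
    rw [hin] at H1
    have H1s : γ * φ (k + 1) + A - γ * B ≤ γ * r := by
      have h := mul_le_mul_of_nonneg_left H1 hγ.le
      have he : γ * (φ (k + 1) + 1 / γ * (A - γ * B)) = γ * φ (k + 1) + A - γ * B := by
        field_simp
        ring
      linarith [h, he.le, he.ge]
    -- descent step, rescaled
    have H2 := fbs_descent_lemma hg' (by positivity : (0:ℝ) ≤ 1 / β) hLip zk p
    rw [← hCc, ← hD] at H2
    have H2s : 2 * β * g p ≤ 2 * β * g zk + 2 * β * Cc + D := by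
      have h := mul_le_mul_of_nonneg_left H2 (by positivity : (0:ℝ) ≤ 2 * β)
      have he : 2 * β * (g zk + Cc + 1 / β / 2 * D) = 2 * β * g zk + 2 * β * Cc + D := by
        field_simp
      linarith [h, he.le, he.ge]
    -- convexity step
    have H3 : g zk + E ≤ g x := by
      have := fbs_convex_grad_le hg_conv (hg' zk) x
      rwa [← hE] at this
    -- parallelogram-type identity
    have Hpar : 2 * A = D + F - G := by
      have h := @norm_sub_sq_real H _ _ (zk - p) (x - p)
      have he : zk - p - (x - p) = zk - x := by abel
      rw [he] at h
      rw [hA, hD, hF, hG]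
      rw [show ‖p - zk‖ ^ 2 = ‖zk - p‖ ^ 2 from by rw [norm_sub_rev]]
      linarith
    -- zero-sum of inner products
    have Hzero : B + Cc = E := by
      rw [hB, hCc, hE, ← inner_add_right]
      congr 1
      abel
    -- scaled versions
    have H1s2 := mul_le_mul_of_nonneg_left H1s (by positivity : (0:ℝ) ≤ 2 * β)
    have H2s2 := mul_le_mul_of_nonneg_left H2s hγ.le
    have H32 := mul_le_mul_of_nonneg_left H3 (by positivity : (0:ℝ) ≤ 2 * β * γ)
    have HparS : 2 * β * A = β * D + β * F - β * G := by linear_combination β * Hpar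
    have HzeroS : 2 * β * γ * B + 2 * β * γ * Cc = 2 * β * γ * E := by
      linear_combination (2 * β * γ) * Hzero
    have hFrev : ‖p - x‖ ^ 2 = F := by rw [hF, norm_sub_rev]
    rw [hFrev]
    linarith [H1s2, H2s2, H32, HparS, HzeroS]
  -- the gap function
  set Gap : ℕ → ℝ := fun k => φ k + g (z k) - (s + g xstar) with hGap
  have hgapnn : ∀ k, 0 ≤ Gap k := by
    intro k
    have h := hxstar (z k)
    rw [hs, hφ k, ← EReal.coe_add, ← EReal.coe_add, EReal.coe_le_coe_iff] at h
    simp only [hGap]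
    linarith
  have hgapstep : ∀ k, Gap (k + 1) ≤ Gap k := by
    intro k
    have h := hkey k (z k) (φ k) (hφ k)
    have h0 : ‖z k - z k‖ ^ 2 = 0 := by simp
    rw [h0] at h
    have hDnn : (0 : ℝ) ≤ ‖z (k + 1) - z k‖ ^ 2 := by positivity
    have hnp : (γ - 2 * β) * ‖z (k + 1) - z k‖ ^ 2 ≤ 0 :=
      mul_nonpos_of_nonpos_of_nonneg (by linarith) hDnn
    have hmul : 2 * β * γ * (φ (k + 1) + g (z (k + 1))) ≤
        2 * β * γ * (φ k + g (z k)) := by linarith [h, hnp]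
    have := le_of_mul_le_mul_left hmul (by positivity : (0 : ℝ) < 2 * β * γ)
    simp only [hGap]
    linarith
  have hgapmono : ∀ m n : ℕ, m ≤ n → Gap n ≤ Gap m := by
    intro m n h
    exact antitone_nat_of_succ_le hgapstep h
  -- the vector -g'(xstar) is a subgradient of f at xstar
  have hfixmin : ∀ (y : H) (r : ℝ), f y = (r : EReal) → s - ⟪g' xstar, y - xstar⟫ ≤ r := by
    intro y r hr
    apply fbs_le_of_forall_unit (K := 1 / β / 2 * ‖y - xstar‖ ^ 2) (by positivity)
    intro t ht0 ht1
    set yt := xstar + t • (y - xstar) with hyt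
    have hcvx : f yt ≤ (((1 - t) * s + t * r : ℝ) : EReal) := by
      have h1 : (1 - t) • xstar + t • y = yt := by rw [hyt]; module
      have := hf_conv xstar y (1 - t) t (by linarith) ht0.le (by ring)
      rw [h1, hs, hr, ← EReal.coe_mul, ← EReal.coe_mul, ← EReal.coe_add] at this
      exact this
    have hytfin : f yt ≠ ⊤ := by
      intro h; rw [h, top_le_iff] at hcvx; exact EReal.coe_ne_top _ hcvx
    have hym : f yt = ((f yt).toReal : EReal) := (EReal.coe_toReal hytfin (hf_bot yt)).symm
    rw [hym, EReal.coe_le_coe_iff] at hcvx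
    have hmin := hxstar yt
    rw [hs, hym, ← EReal.coe_add, ← EReal.coe_add, EReal.coe_le_coe_iff] at hmin
    have hdes := fbs_descent_lemma hg' (by positivity : (0:ℝ) ≤ 1 / β) hLip xstar yt
    have he1 : yt - xstar = t • (y - xstar) := by rw [hyt]; abel
    rw [he1, real_inner_smul_right] at hdes
    have he2 : ‖t • (y - xstar)‖ ^ 2 = t ^ 2 * ‖y - xstar‖ ^ 2 := by
      rw [norm_smul, Real.norm_eq_abs, mul_pow, sq_abs]
    rw [he2] at hdes
    have hdiv : t * (s - ⟪g' xstar, y - xstar⟫) ≤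
        t * (r + t * (1 / β / 2 * ‖y - xstar‖ ^ 2)) := by nlinarith [hmin, hcvx, hdes]
    exact le_of_mul_le_mul_left hdiv ht0
  -- xstar is a fixed point of the FBS operator
  have hfixed : proxf (xstar - γ • g' xstar) = xstar := by
    rw [hproxf]
    intro y
    by_cases hy : f y = ⊤
    · rw [hy, EReal.top_add_coe]; exact le_top
    · have hyr : f y = ((f y).toReal : EReal) := (EReal.coe_toReal hy (hf_bot y)).symm
      rw [hs, hyr, ← EReal.coe_add, ← EReal.coe_add, EReal.coe_le_coe_iff]
      have h1 := hfixmin y ((f y).toReal) hyr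
      have he1 : xstar - (xstar - γ • g' xstar) = γ • g' xstar := by abel
      have he2 : y - (xstar - γ • g' xstar) = (y - xstar) + γ • g' xstar := by abel
      rw [he1, he2, norm_add_sq_real, real_inner_smul_right]
      have he3 : ‖γ • g' xstar‖ ^ 2 = γ ^ 2 * ‖g' xstar‖ ^ 2 := by
        rw [norm_smul, Real.norm_eq_abs, mul_pow, sq_abs]
      rw [he3, real_inner_comm (g' xstar) (y - xstar)]
      have hexp : 1 / (2 * γ) * (‖y - xstar‖ ^ 2 + 2 * (γ * ⟪g' xstar, y - xstar⟫) +
          γ ^ 2 * ‖g' xstar‖ ^ 2) = 1 / (2 * γ) * ‖y - xstar‖ ^ 2 +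
          ⟪g' xstar, y - xstar⟫ + 1 / (2 * γ) * (γ ^ 2 * ‖g' xstar‖ ^ 2) := by
        field_simp
      rw [hexp]
      have hNnn : (0:ℝ) ≤ 1 / (2 * γ) * ‖y - xstar‖ ^ 2 := by positivity
      linarith
  -- Fejér inequality (scaled)
  have hFej : ∀ k : ℕ,
      2 * β * γ * ‖z (k + 1) - xstar‖ ^ 2 ≤
        2 * β * γ * ‖z k - xstar‖ ^ 2 - γ * (2 * β - γ) * ‖z (k + 1) - z k‖ ^ 2 := by
    intro k
    set p := z (k + 1) with hpd
    set zk := z k with hzkd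
    set U : H := g' (z k) - g' xstar with hUd
    set vk : H := z k - γ • g' (z k) with hvkd
    set w : H := xstar - γ • g' xstar with hwd
    -- firm nonexpansiveness of the prox at the pair (vk, w)
    have h1 : φ (k + 1) + 1 / γ * ⟪vk - p, xstar - p⟫ ≤ s := hsubR k xstar s hs
    have h2 : s + 1 / γ * ⟪w - xstar, p - xstar⟫ ≤ φ (k + 1) := by
      have hsg := fbs_prox_subgrad f hf_bot hf_conv hγ w xstar hfxfin
        ((hproxf w xstar).mp hfixed) p
      rw [hφ (k + 1), EReal.coe_le_coe_iff] at hsg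
      rwa [← hsdef] at hsg
    have hX : ⟪vk - p, xstar - p⟫ + ⟪w - xstar, p - xstar⟫ ≤ 0 := by
      have h3 : 1 / γ * (⟪vk - p, xstar - p⟫ + ⟪w - xstar, p - xstar⟫) ≤ 0 := by
        rw [mul_add]; linarith
      have h4 := mul_le_mul_of_nonneg_left h3 hγ.le
      have h5 : γ * (1 / γ * (⟪vk - p, xstar - p⟫ + ⟪w - xstar, p - xstar⟫)) =
          ⟪vk - p, xstar - p⟫ + ⟪w - xstar, p - xstar⟫ := by field_simp
      rw [h5] at h4
      simpa using h4
    have hfirm : ‖p - xstar‖ ^ 2 ≤ ⟪vk - w, p - xstar⟫ := by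
      have e1 : ⟪vk - p, xstar - p⟫ = ⟪p - vk, p - xstar⟫ := by
        rw [← inner_neg_neg]; congr 1 <;> abel
      rw [e1] at hX
      have e2 : ⟪p - vk, p - xstar⟫ + ⟪w - xstar, p - xstar⟫ =
          ⟪(p - xstar) - (vk - w), p - xstar⟫ := by
        rw [← inner_add_left]; congr 1; abel
      rw [e2, inner_sub_left, real_inner_self_eq_norm_sq] at hX
      linarith
    -- cocoercivity
    have hcoco : β * ‖U‖ ^ 2 ≤ ⟪U, zk - xstar⟫ := fbs_coco hg_conv hg' hβ hLip (z k) xstar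
    have hvw : vk - w = (zk - xstar) - γ • U := by rw [hvkd, hwd, hUd]; module
    have hb : ‖vk - w‖ ^ 2 = ‖zk - xstar‖ ^ 2 - 2 * (γ * ⟪U, zk - xstar⟫) +
        γ ^ 2 * ‖U‖ ^ 2 := by
      rw [hvw, norm_sub_sq_real, real_inner_smul_right, norm_smul, Real.norm_eq_abs,
        mul_pow, sq_abs, real_inner_comm]
    set a : H := (vk - w) - (p - xstar) with had
    have he1n : ‖a‖ ^ 2 = ‖vk - w‖ ^ 2 - 2 * ⟪vk - w, p - xstar⟫ + ‖p - xstar‖ ^ 2 :=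
      norm_sub_sq_real _ _
    have hchain : ‖p - xstar‖ ^ 2 + ‖a‖ ^ 2 ≤ ‖vk - w‖ ^ 2 := by linarith
    have hcoco2 := mul_le_mul_of_nonneg_left hcoco (by positivity : (0:ℝ) ≤ 2 * γ)
    have hc : ‖p - xstar‖ ^ 2 ≤ ‖zk - xstar‖ ^ 2 - γ * (2 * β - γ) * ‖U‖ ^ 2 - ‖a‖ ^ 2 := by
      nlinarith [hchain, hb, hcoco2]
    have hc2 := mul_le_mul_of_nonneg_left hc (by positivity : (0:ℝ) ≤ 2 * β * γ)
    set b : H := γ • U with hbd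
    have hbn : ‖b‖ ^ 2 = γ ^ 2 * ‖U‖ ^ 2 := by
      rw [hbd, norm_smul, Real.norm_eq_abs, mul_pow, sq_abs]
    have hab : ‖a + b‖ ^ 2 = ‖a‖ ^ 2 + 2 * ⟪a, b⟫ + ‖b‖ ^ 2 := norm_add_sq_real _ _
    have hsqe : ‖γ • a - (2 * β - γ) • b‖ ^ 2 =
        γ ^ 2 * ‖a‖ ^ 2 - 2 * (γ * ((2 * β - γ) * ⟪a, b⟫)) + (2 * β - γ) ^ 2 * ‖b‖ ^ 2 := by
      rw [norm_sub_sq_real, real_inner_smul_left, real_inner_smul_right, norm_smul,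
        norm_smul, Real.norm_eq_abs, Real.norm_eq_abs, mul_pow, mul_pow, sq_abs, sq_abs]
    have hsq : (0:ℝ) ≤ ‖γ • a - (2 * β - γ) • b‖ ^ 2 := by positivity
    have hsplit : γ * (2 * β - γ) * ‖a + b‖ ^ 2 ≤
        2 * β * γ * ‖a‖ ^ 2 + 2 * β * (2 * β - γ) * ‖b‖ ^ 2 := by
      rw [hsqe] at hsq
      rw [hab]
      linarith [hsq]
    have habz : a + b = zk - p := by rw [had, hbd, hvkd, hwd, hUd]; module
    have hDke : ‖p - zk‖ ^ 2 = ‖a + b‖ ^ 2 := by rw [habz, norm_sub_rev]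
    rw [hDke]
    rw [hbn] at hsplit
    linarith [hc2, hsplit]
  -- telescoping sums
  set Dk : ℕ → ℝ := fun i => ‖z (i + 1) - z i‖ ^ 2 with hDk
  have hDknn : ∀ i, 0 ≤ Dk i := fun i => by positivity
  have hT1 : ∀ n : ℕ,
      2 * β * γ * (∑ i ∈ Finset.range n, Gap (i + 1)) ≤
        β * (R - ‖z n - xstar‖ ^ 2) + (γ - β) * (∑ i ∈ Finset.range n, Dk i) := by
    intro n
    induction n with
    | zero => simp [hR]
    | succ n ih =>
      have h := hkey n xstar s hs
      have hg2 : 2 * β * γ * Gap (n + 1) ≤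
          β * (‖z n - xstar‖ ^ 2 - ‖z (n + 1) - xstar‖ ^ 2) + (γ - β) * Dk n := by
        simp only [hGap, hDk]
        nlinarith [h]
      rw [Finset.sum_range_succ, Finset.sum_range_succ]
      nlinarith [ih, hg2]
  have hT2 : ∀ n : ℕ,
      2 * β * γ * ‖z n - xstar‖ ^ 2 + γ * (2 * β - γ) * (∑ i ∈ Finset.range n, Dk i) ≤
        2 * β * γ * R := by
    intro n
    induction n with
    | zero => simp [hR]
    | succ n ih =>
      have h := hFej n
      rw [Finset.sum_range_succ]
      simp only [hDk]
      nlinarith [ih, h]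
  -- the summed bound
  have hCsum : ∀ n : ℕ, (∑ i ∈ Finset.range n, Gap (i + 1)) ≤ C * R := by
    intro n
    have hDSnn : 0 ≤ ∑ i ∈ Finset.range n, Dk i :=
      Finset.sum_nonneg (fun i _ => hDknn i)
    have hGnnn : (0:ℝ) ≤ ‖z n - xstar‖ ^ 2 := by positivity
    have hT1n := hT1 n
    by_cases hcase : γ ≤ β
    · -- C = 1/(2γ)
      have hCval : C = 1 / (2 * γ) := by rw [hC, if_pos hcase]
      apply le_of_mul_le_mul_left _ (by positivity : (0:ℝ) < 2 * β * γ)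
      have he : 2 * β * γ * (C * R) = β * R := by
        rw [hCval]; field_simp
      rw [he]
      have hnp : (γ - β) * (∑ i ∈ Finset.range n, Dk i) ≤ 0 :=
        mul_nonpos_of_nonpos_of_nonneg (by linarith) hDSnn
      nlinarith [hT1n, hnp, mul_nonneg hβ.le hGnnn]
    · -- β < γ
      push_neg at hcase
      have h2βγpos : (0:ℝ) < 2 * β - γ := by linarith
      have h4βγpos : (0:ℝ) < 4 * β - γ := by linarith
      have hCval : C = 1 / (2 * γ) + (γ - β) / (γ * (2 * β - γ)) := by
        rw [hC, if_neg (not_le.mpr hcase)]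
        have h1 : 1 - 2 * β / (4 * β - γ) = (2 * β - γ) / (4 * β - γ) := by
          rw [eq_div_iff h4βγpos.ne', sub_mul, div_mul_cancel₀ _ h4βγpos.ne']; ring
        rw [h1, mul_div_assoc, div_div_div_cancel_right₀ h4βγpos.ne']
        have := h2βγpos.ne'
        field_simp
      -- bound on the sum of squared steps
      have hDbound : (∑ i ∈ Finset.range n, Dk i) ≤ 2 * β * R / (2 * β - γ) := by
        rw [le_div_iff₀ h2βγpos]
        apply le_of_mul_le_mul_left _ hγ
        have hT2n := hT2 n
        nlinarith [hT2n, mul_nonneg (mul_nonneg (by linarith : (0:ℝ) ≤ 2 * β) hγ.le) hGnnn]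
      apply le_of_mul_le_mul_left _ (by positivity : (0:ℝ) < 2 * β * γ)
      have he : 2 * β * γ * (C * R) = β * R + (γ - β) * (2 * β * R / (2 * β - γ)) := by
        rw [hCval]; field_simp
      rw [he]
      have hD2 : (γ - β) * (∑ i ∈ Finset.range n, Dk i) ≤
          (γ - β) * (2 * β * R / (2 * β - γ)) :=
        mul_le_mul_of_nonneg_left hDbound (by linarith)
      nlinarith [hT1n, hD2, mul_nonneg hβ.le hGnnn]
  have hCRnn : 0 ≤ C * R := by
    have := hCsum 0
    simpa using this
  -- rate
  have hrate : ∀ k : ℕ, Gap (k + 1) ≤ C * R / ((k : ℝ) + 1) := by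
    intro k
    have hcard : ((k + 1 : ℕ) : ℝ) * Gap (k + 1) ≤ ∑ i ∈ Finset.range (k + 1), Gap (i + 1) := by
      have hle : ∀ i ∈ Finset.range (k + 1), Gap (k + 1) ≤ Gap (i + 1) := by
        intro i hi
        have hik := Finset.mem_range.mp hi
        exact hgapmono (i + 1) (k + 1) (by omega)
      have := Finset.card_nsmul_le_sum (Finset.range (k + 1)) (fun i => Gap (i + 1)) _ hle
      rwa [Finset.card_range, nsmul_eq_mul] at this
    rw [le_div_iff₀ (by positivity : (0 : ℝ) < (k : ℝ) + 1)]
    have h2 := hCsum (k + 1)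
    push_cast at hcard
    linarith
  constructor
  · intro k
    rw [hφ (k + 1), hs, ← EReal.coe_add, ← EReal.coe_add, ← EReal.coe_sub,
      EReal.coe_le_coe_iff]
    have := hrate k
    simp only [hGap] at this
    linarith
  · have htd : Tendsto (fun n : ℕ => (n : ℝ) * Gap n) atTop (𝓝 0) := by
      apply fbs_tendsto_nat_mul_atTop_zero hgapnn hgapmono (c := Gap 0 + C * R)
      intro n
      cases n with
      | zero =>
        simp only [Finset.sum_range_zero]
        linarith [hgapnn 0, hCRnn]
      | succ m =>
        rw [Finset.sum_range_succ']
        have := hCsum m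
        linarith
    have htd2 : Tendsto (fun k : ℕ => ((k : ℝ) + 1) * Gap (k + 1)) atTop (𝓝 0) := by
      have := htd.comp (tendsto_add_atTop_nat 1)
      apply this.congr
      intro k
      simp only [Function.comp_apply]
      push_cast
      ring
    have hfun : ∀ k : ℕ, (((k : ℝ) + 1 : ℝ) : EReal) *
        (f (z (k + 1)) + ((g (z (k + 1)) : ℝ) : EReal) -
          (f xstar + ((g xstar : ℝ) : EReal))) =
        ((((k : ℝ) + 1) * Gap (k + 1) : ℝ) : EReal) := by
      intro k
      rw [hφ (k + 1), hs, ← EReal.coe_add, ← EReal.coe_add, ← EReal.coe_sub, ← EReal.coe_mul]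
    have := (EReal.tendsto_coe (a := (0:ℝ))).mpr htd2
    rw [EReal.coe_zero] at this
    exact this.congr (fun k => (hfun k).symm)
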